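/- Let C = (φ,Φ) be a strongly measurable skew-evolution semiflow with bounded exponential growth. Then C is exponentially stable if and only if C is exponentially integrally stable. -/

import Mathlib

open MeasureTheory

noncomputable section

/-- An evolution semiflow on `X`: `φ(t,t,x) = x` for `t ≥ 0` and
`φ(t,s,φ(s,t₀,x)) = φ(t,t₀,x)` for `t ≥ s ≥ t₀ ≥ 0`. -/
def IsEvolutionSemiflow {X : Type*} (φ : ℝ → ℝ → X → X) : Prop :=
  (∀ t : ℝ, ∀ x : X, 0 ≤ t → φ t t x = x) ∧
  (∀ t s t₀ : ℝ, ∀ x : X, 0 ≤ t₀ → t₀ ≤ s → s ≤ t → φ t s (φ s t₀ x) = φ t t₀ x)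

/-- An evolution cocycle over an evolution semiflow `φ`:
`Φ(t,t,x) = Id` for `t ≥ 0` and `Φ(t,s,φ(s,t₀,x)) ∘ Φ(s,t₀,x) = Φ(t,t₀,x)`
for `t ≥ s ≥ t₀ ≥ 0`. The pair `(φ, Φ)` is a skew-evolution semiflow. -/
def IsEvolutionCocycle {X V : Type*} [NormedAddCommGroup V] [NormedSpace ℝ V]
    (φ : ℝ → ℝ → X → X) (Φ : ℝ → ℝ → X → V →L[ℝ] V) : Prop :=
  (∀ t : ℝ, ∀ x : X, 0 ≤ t → Φ t t x = ContinuousLinearMap.id ℝ V) ∧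
  (∀ t s t₀ : ℝ, ∀ x : X, 0 ≤ t₀ → t₀ ≤ s → s ≤ t →
    (Φ t s (φ s t₀ x)).comp (Φ s t₀ x) = Φ t t₀ x)

/-- Uniform exponential stability. -/
def IsUnifExpStable {X V : Type*} [NormedAddCommGroup V] [NormedSpace ℝ V]
    (Φ : ℝ → ℝ → X → V →L[ℝ] V) : Prop :=
  ∃ N α : ℝ, 1 ≤ N ∧ 0 < α ∧
    ∀ t s t₀ : ℝ, ∀ x : X, ∀ v : V, 0 ≤ t₀ → t₀ ≤ s → s ≤ t →
      ‖Φ t t₀ x v‖ ≤ N * Real.exp (-α * (t - s)) * ‖Φ s t₀ x v‖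

/-- Barreira-Valls exponential stability. -/
def IsBarreiraVallsExpStable {X V : Type*} [NormedAddCommGroup V] [NormedSpace ℝ V]
    (Φ : ℝ → ℝ → X → V →L[ℝ] V) : Prop :=
  ∃ N α β : ℝ, 1 ≤ N ∧ 0 < α ∧ α ≤ β ∧
    ∀ t s t₀ : ℝ, ∀ x : X, ∀ v : V, 0 ≤ t₀ → t₀ ≤ s → s ≤ t →
      ‖Φ t t₀ x v‖ ≤ N * Real.exp (-α * t) * Real.exp (β * s) * ‖Φ s t₀ x v‖

/-- (Nonuniform) exponential stability. -/
def IsExpStable {X V : Type*} [NormedAddCommGroup V] [NormedSpace ℝ V]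
    (Φ : ℝ → ℝ → X → V →L[ℝ] V) : Prop :=
  ∃ N : ℝ → ℝ, ∃ α : ℝ, (∀ s : ℝ, 1 ≤ N s) ∧ 0 < α ∧
    ∀ t s t₀ : ℝ, ∀ x : X, ∀ v : V, 0 ≤ t₀ → t₀ ≤ s → s ≤ t →
      ‖Φ t t₀ x v‖ ≤ N s * Real.exp (-α * t) * ‖Φ s t₀ x v‖

/-- (Nonuniform) stability. -/
def IsStable {X V : Type*} [NormedAddCommGroup V] [NormedSpace ℝ V]
    (Φ : ℝ → ℝ → X → V →L[ℝ] V) : Prop :=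
  ∃ N : ℝ → ℝ, (∀ s : ℝ, 1 ≤ N s) ∧
    ∀ t s t₀ : ℝ, ∀ x : X, ∀ v : V, 0 ≤ t₀ → t₀ ≤ s → s ≤ t →
      ‖Φ t t₀ x v‖ ≤ N s * ‖Φ s t₀ x v‖

/-- Exponential growth: `M, ω : ℝ₊ → [1,∞)` nondecreasing with
`‖Φ(t,t₀,x)v‖ ≤ M(s) e^{ω(t-s)} ‖Φ(s,t₀,x)v‖` for `t ≥ s ≥ t₀ ≥ 0`. -/
def HasExpGrowth {X V : Type*} [NormedAddCommGroup V] [NormedSpace ℝ V]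
    (Φ : ℝ → ℝ → X → V →L[ℝ] V) : Prop :=
  ∃ M ω : ℝ → ℝ, MonotoneOn M (Set.Ici 0) ∧ MonotoneOn ω (Set.Ici 0) ∧
    (∀ s : ℝ, 0 ≤ s → 1 ≤ M s) ∧ (∀ s : ℝ, 0 ≤ s → 1 ≤ ω s) ∧
    ∀ t s t₀ : ℝ, ∀ x : X, ∀ v : V, 0 ≤ t₀ → t₀ ≤ s → s ≤ t →
      ‖Φ t t₀ x v‖ ≤ M s * Real.exp (ω (t - s)) * ‖Φ s t₀ x v‖

/-- Bounded exponential growth: exponential growth where `M` can be chosen bounded. -/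
def HasBoundedExpGrowth {X V : Type*} [NormedAddCommGroup V] [NormedSpace ℝ V]
    (Φ : ℝ → ℝ → X → V →L[ℝ] V) : Prop :=
  ∃ M ω : ℝ → ℝ, MonotoneOn M (Set.Ici 0) ∧ MonotoneOn ω (Set.Ici 0) ∧
    (∀ s : ℝ, 0 ≤ s → 1 ≤ M s) ∧ (∀ s : ℝ, 0 ≤ s → 1 ≤ ω s) ∧
    (∃ K : ℝ, ∀ s : ℝ, 0 ≤ s → M s ≤ K) ∧
    ∀ t s t₀ : ℝ, ∀ x : X, ∀ v : V, 0 ≤ t₀ → t₀ ≤ s → s ≤ t →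
      ‖Φ t t₀ x v‖ ≤ M s * Real.exp (ω (t - s)) * ‖Φ s t₀ x v‖

/-- Integral stability: `∫_s^∞ ‖Φ(t,t₀,x)v‖ dt ≤ D(s) ‖Φ(s,t₀,x)v‖` for `s ≥ t₀ ≥ 0`. -/
def IsIntegrallyStable {X V : Type*} [NormedAddCommGroup V] [NormedSpace ℝ V]
    (Φ : ℝ → ℝ → X → V →L[ℝ] V) : Prop :=
  ∃ D : ℝ → ℝ, (∀ s : ℝ, 0 ≤ s → 0 < D s) ∧
    ∀ s t₀ : ℝ, ∀ x : X, ∀ v : V, 0 ≤ t₀ → t₀ ≤ s →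
      IntegrableOn (fun t => ‖Φ t t₀ x v‖) (Set.Ioi s) ∧
      ∫ t in Set.Ioi s, ‖Φ t t₀ x v‖ ≤ D s * ‖Φ s t₀ x v‖

/-- Exponential integral stability:
`∫_s^∞ e^{d(t-s)} ‖Φ(t,s,x)v‖ dt ≤ D(s) ‖v‖` for `s ≥ 0`. -/
def IsExpIntegrallyStable {X V : Type*} [NormedAddCommGroup V] [NormedSpace ℝ V]
    (Φ : ℝ → ℝ → X → V →L[ℝ] V) : Prop :=
  ∃ D : ℝ → ℝ, ∃ d : ℝ, (∀ s : ℝ, 0 ≤ s → 0 < D s) ∧ 0 < d ∧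
    ∀ s : ℝ, ∀ x : X, ∀ v : V, 0 ≤ s →
      IntegrableOn (fun t => Real.exp (d * (t - s)) * ‖Φ t s x v‖) (Set.Ioi s) ∧
      ∫ t in Set.Ioi s, Real.exp (d * (t - s)) * ‖Φ t s x v‖ ≤ D s * ‖v‖

/-- Strong measurability: for every `t₀ ≥ 0`, `x`, `v` the map
`s ↦ ‖Φ(s,t₀,x)v‖` is measurable on `[t₀,∞)`. -/
def IsStronglyMeasurable {X V : Type*} [NormedAddCommGroup V] [NormedSpace ℝ V]
    (Φ : ℝ → ℝ → X → V →L[ℝ] V) : Prop :=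
  ∀ t₀ : ℝ, ∀ x : X, ∀ v : V, 0 ≤ t₀ →
    Measurable ((Set.Ici t₀).restrict fun s => ‖Φ s t₀ x v‖)

/-- `*`-strong measurability: for every `t ≥ t₀ ≥ 0`, `x` and `v*` in the dual, the map
`s ↦ ‖Φ(t,s,φ(s,t₀,x))* v*‖` is measurable on `[t₀,t]` (here the adjoint applied to
`g : V →L[ℝ] ℝ` is `g ∘ Φ(t,s,φ(s,t₀,x))`). -/
def IsStarStronglyMeasurable {X V : Type*} [NormedAddCommGroup V] [NormedSpace ℝ V]
    (φ : ℝ → ℝ → X → X) (Φ : ℝ → ℝ → X → V →L[ℝ] V) : Prop :=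
  ∀ t t₀ : ℝ, ∀ x : X, ∀ g : V →L[ℝ] ℝ, 0 ≤ t₀ → t₀ ≤ t →
    Measurable ((Set.Icc t₀ t).restrict fun s => ‖g.comp (Φ t s (φ s t₀ x))‖)


open Set Real in
private lemma myint_aux {d : ℝ} (hd : 0 < d) (a : ℝ) :
    ∫ x in Set.Ioi a, Real.exp (-d * x) = Real.exp (-d * a) / d := by
  have hderiv : ∀ x ∈ Set.Ici a, HasDerivAt (fun x => -Real.exp (-d * x) / d)
      (Real.exp (-d * x)) x := by
    intro x _
    have h0 : HasDerivAt (fun x : ℝ => -d * x) (-d) x := by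
      simpa using (hasDerivAt_id x).const_mul (-d)
    have h1 : HasDerivAt (fun x => Real.exp (-d * x)) (Real.exp (-d * x) * (-d)) x :=
      (Real.hasDerivAt_exp (-d * x)).comp x h0
    have := (h1.neg).div_const d
    refine this.congr_deriv ?_
    rw [mul_neg, neg_neg, mul_div_assoc, div_self hd.ne', mul_one]
  have htend : Filter.Tendsto (fun x => -Real.exp (-d * x) / d) Filter.atTop (nhds 0) := by
    have h1 : Filter.Tendsto (fun x : ℝ => -d * x) Filter.atTop Filter.atBot :=
      Filter.Tendsto.const_mul_atTop_of_neg (neg_neg_of_pos hd) Filter.tendsto_id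
    have h2 : Filter.Tendsto (fun x => Real.exp (-d * x)) Filter.atTop (nhds 0) :=
      Real.tendsto_exp_atBot.comp h1
    simpa using (h2.neg).div_const d
  have := integral_Ioi_of_hasDerivAt_of_tendsto' hderiv (exp_neg_integrableOn_Ioi a hd) htend
  rw [this]; ring

private lemma aesm_norm_aux {X V : Type*} [NormedAddCommGroup V] [NormedSpace ℝ V]
    (Φ : ℝ → ℝ → X → V →L[ℝ] V) (hm : IsStronglyMeasurable Φ)
    {t₀ s : ℝ} (ht₀ : 0 ≤ t₀) (hst : t₀ ≤ s) (x : X) (v : V) :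
    MeasureTheory.AEStronglyMeasurable (fun t => ‖Φ t t₀ x v‖)
      (MeasureTheory.volume.restrict (Set.Ioi s)) := by
  have hmeas := hm t₀ x v ht₀
  have hF : Measurable (Function.extend (Subtype.val : Set.Ici t₀ → ℝ)
      ((Set.Ici t₀).restrict fun t => ‖Φ t t₀ x v‖) (fun _ => 0)) :=
    (MeasurableEmbedding.subtype_coe measurableSet_Ici).measurable_extend hmeas measurable_const
  refine hF.aestronglyMeasurable.congr ?_
  filter_upwards [MeasureTheory.ae_restrict_mem measurableSet_Ioi] with t ht
  have htm : t ∈ Set.Ici t₀ := le_trans hst (le_of_lt ht)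
  have := Function.Injective.extend_apply (Subtype.val_injective)
    ((Set.Ici t₀).restrict fun t => ‖Φ t t₀ x v‖) (fun _ => 0) ⟨t, htm⟩
  exact this

/-- Datko-type theorem: a strongly measurable skew-evolution semiflow with bounded
exponential growth is exponentially stable iff it is exponentially integrally stable. -/
theorem stmt1 {X V : Type*} [MetricSpace X]
    [NormedAddCommGroup V] [NormedSpace ℝ V] [CompleteSpace V]
    (φ : ℝ → ℝ → X → X) (Φ : ℝ → ℝ → X → V →L[ℝ] V)
    (hφ : IsEvolutionSemiflow φ) (hΦ : IsEvolutionCocycle φ Φ)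
    (hm : IsStronglyMeasurable Φ) (hg : HasBoundedExpGrowth Φ) :
    IsExpStable Φ ↔ IsExpIntegrallyStable Φ := by
  constructor
  · rintro ⟨N, α, hN, hα, hS⟩
    have hd : 0 < α / 2 := half_pos hα
    set d := α / 2 with hdd
    refine ⟨fun s => N s * Real.exp (-(2*d) * s) / d, d, ?_, hd, ?_⟩
    · intro s _
      exact div_pos (mul_pos (lt_of_lt_of_le one_pos (hN s)) (Real.exp_pos _)) hd
    · intro s x v hs
      have hid : ∀ t : ℝ, t ∈ Set.Ioi s → ‖Φ t s x v‖ ≤ N s * Real.exp (-α * t) * ‖v‖ := by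
        intro t ht
        have h1 := hS t s s x v hs le_rfl (le_of_lt ht)
        rw [hΦ.1 s x hs] at h1
        simpa using h1
      set f : ℝ → ℝ := fun t => Real.exp (d * (t - s)) * ‖Φ t s x v‖ with hfdef
      set g : ℝ → ℝ := fun t => (N s * ‖v‖ * Real.exp (-d * s)) * Real.exp (-d * t) with hgdef
      have hexp : ∀ t : ℝ, Real.exp (d * (t - s)) * Real.exp (-α * t)
          = Real.exp (-d * s) * Real.exp (-d * t) := by
        intro t
        rw [← Real.exp_add, ← Real.exp_add]
        congr 1
        rw [hdd]; ring
      have hfg : ∀ t ∈ Set.Ioi s, f t ≤ g t := by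
        intro t ht
        have h1 := hid t ht
        have h2 : f t ≤ Real.exp (d * (t - s)) * (N s * Real.exp (-α * t) * ‖v‖) := by
          simp only [hfdef]
          exact mul_le_mul_of_nonneg_left h1 (Real.exp_pos _).le
        refine h2.trans (le_of_eq ?_)
        simp only [hgdef]
        linear_combination (N s * ‖v‖) * hexp t
      have hgint : MeasureTheory.IntegrableOn g (Set.Ioi s) :=
        (exp_neg_integrableOn_Ioi s hd).const_mul _
      have hfmeas : MeasureTheory.AEStronglyMeasurable f
          (MeasureTheory.volume.restrict (Set.Ioi s)) :=
        ((Real.continuous_exp.comp (by fun_prop : Continuous fun t : ℝ => d * (t - s))).aestronglyMeasurable).mul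
          (aesm_norm_aux Φ hm hs le_rfl x v)
      have hfint : MeasureTheory.IntegrableOn f (Set.Ioi s) := by
        refine MeasureTheory.Integrable.mono' hgint hfmeas ?_
        filter_upwards [MeasureTheory.ae_restrict_mem measurableSet_Ioi] with t ht
        have h0 : 0 ≤ f t := by
          simp only [hfdef]
          positivity
        rw [Real.norm_of_nonneg h0]
        exact hfg t ht
      refine ⟨hfint, ?_⟩
      calc (∫ t in Set.Ioi s, Real.exp (d * (t - s)) * ‖Φ t s x v‖)
          ≤ ∫ t in Set.Ioi s, g t :=
            MeasureTheory.setIntegral_mono_on hfint hgint measurableSet_Ioi hfg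
        _ = (N s * ‖v‖ * Real.exp (-d * s)) * (Real.exp (-d * s) / d) := by
            rw [hgdef, MeasureTheory.integral_const_mul, myint_aux hd]
        _ = N s * Real.exp (-(2*d) * s) / d * ‖v‖ := by
            have h2 : Real.exp (-(2*d)*s) = Real.exp (-d*s) * Real.exp (-d*s) := by
              rw [← Real.exp_add]; ring_nf
            rw [h2]; ring
  · rintro ⟨D, d, hD, hd, hI⟩
    obtain ⟨M, ω, hMmono, hωmono, hM1, hω1, ⟨K, hK⟩, hgrow⟩ := hg
    have hK1 : (1:ℝ) ≤ K := le_trans (hM1 0 le_rfl) (hK 0 le_rfl)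
    set C := K * Real.exp (ω 1) * Real.exp d with hC
    refine ⟨fun s => max 1 (C * max 1 (D s) * Real.exp (d * s)), d,
      fun s => le_max_left _ _, hd, ?_⟩
    intro t s t₀ x v ht₀ hts hst
    have hs0 : 0 ≤ s := le_trans ht₀ hts
    have hm1 : (1:ℝ) ≤ max 1 (D s) := le_max_left _ _
    have key : ‖Φ t t₀ x v‖
        ≤ C * max 1 (D s) * Real.exp (d * s) * Real.exp (-d * t) * ‖Φ s t₀ x v‖ := by
      rcases le_or_gt t (s+1) with hle | hgt
      · have h1 := hgrow t s t₀ x v ht₀ hts hst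
        have hMs : M s ≤ K := hK s hs0
        have hωs : ω (t - s) ≤ ω 1 :=
          hωmono (Set.mem_Ici.2 (by linarith)) (Set.mem_Ici.2 (by norm_num)) (by linarith)
        have hM0 : (1:ℝ) ≤ M s := hM1 s hs0
        have h2 : ‖Φ t t₀ x v‖ ≤ K * Real.exp (ω 1) * ‖Φ s t₀ x v‖ := by
          refine h1.trans ?_
          have hee : Real.exp (ω (t - s)) ≤ Real.exp (ω 1) := Real.exp_le_exp.2 hωs
          exact mul_le_mul_of_nonneg_right
            (mul_le_mul hMs hee (Real.exp_pos _).le (by linarith)) (norm_nonneg _)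
        have h3 : (1:ℝ) ≤ max 1 (D s) * (Real.exp d * (Real.exp (d*s) * Real.exp (-d*t))) := by
          have hE : (1:ℝ) ≤ Real.exp d * (Real.exp (d*s) * Real.exp (-d*t)) := by
            rw [← Real.exp_add, ← Real.exp_add]
            apply Real.one_le_exp
            nlinarith [hd.le]
          nlinarith
        have hfac : K * Real.exp (ω 1)
            ≤ C * max 1 (D s) * Real.exp (d*s) * Real.exp (-d*t) := by
          have hb : (0:ℝ) ≤ K * Real.exp (ω 1) := by positivity
          calc K * Real.exp (ω 1) = (K * Real.exp (ω 1)) * 1 := by ring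
            _ ≤ (K * Real.exp (ω 1)) *
                (max 1 (D s) * (Real.exp d * (Real.exp (d*s) * Real.exp (-d*t)))) :=
                mul_le_mul_of_nonneg_left h3 hb
            _ = C * max 1 (D s) * Real.exp (d*s) * Real.exp (-d*t) := by rw [hC]; ring
        exact h2.trans (mul_le_mul_of_nonneg_right hfac (norm_nonneg _))
      · have hs1t : s ≤ t - 1 := by linarith
        set x' := φ s t₀ x with hx'
        set w := Φ s t₀ x v with hw
        have hcoc : ∀ τ : ℝ, s ≤ τ → Φ τ t₀ x v = Φ τ s x' w := by
          intro τ hτ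
          rw [← hΦ.2 τ s t₀ x ht₀ hts hτ]; rfl
        obtain ⟨hFint, hFbound⟩ := hI s x' w hs0
        set F : ℝ → ℝ := fun τ => Real.exp (d * (τ - s)) * ‖Φ τ s x' w‖ with hFdef
        have hsub : Set.Ioc (t-1) t ⊆ Set.Ioi s := fun τ hτ => lt_of_le_of_lt hs1t hτ.1
        have hptw : ∀ τ ∈ Set.Ioc (t-1) t,
            ‖Φ t t₀ x v‖ * Real.exp (d * (t - 1 - s)) ≤ (K * Real.exp (ω 1)) * F τ := by
          intro τ hτ
          have hτs : s ≤ τ := le_trans hs1t hτ.1.le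
          have hτ0 : 0 ≤ τ := le_trans hs0 hτs
          have h1 := hgrow t τ t₀ x v ht₀ (le_trans hts hτs) hτ.2
          have hMs : M τ ≤ K := hK τ hτ0
          have hωs : ω (t - τ) ≤ ω 1 :=
            hωmono (Set.mem_Ici.2 (by linarith [hτ.2])) (Set.mem_Ici.2 (by norm_num))
              (by linarith [hτ.1])
          have hM0 : (1:ℝ) ≤ M τ := hM1 τ hτ0
          have h2 : ‖Φ t t₀ x v‖ ≤ K * Real.exp (ω 1) * ‖Φ τ t₀ x v‖ := by
            refine h1.trans ?_
            have hee : Real.exp (ω (t - τ)) ≤ Real.exp (ω 1) := Real.exp_le_exp.2 hωs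
            exact mul_le_mul_of_nonneg_right
              (mul_le_mul hMs hee (Real.exp_pos _).le (by linarith)) (norm_nonneg _)
          have h3 : Real.exp (d * (t - 1 - s)) ≤ Real.exp (d * (τ - s)) :=
            Real.exp_le_exp.2 (by nlinarith [hτ.1, hd.le])
          rw [hcoc τ hτs] at h2
          calc ‖Φ t t₀ x v‖ * Real.exp (d*(t-1-s))
              ≤ (K * Real.exp (ω 1) * ‖Φ τ s x' w‖) * Real.exp (d*(τ-s)) :=
                mul_le_mul h2 h3 (Real.exp_pos _).le (by positivity)
            _ = (K * Real.exp (ω 1)) * F τ := by rw [hFdef]; ring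
        have hvol : MeasureTheory.volume (Set.Ioc (t-1) t) = 1 := by
          rw [Real.volume_Ioc]
          norm_num
        have hFintIoc : MeasureTheory.IntegrableOn F (Set.Ioc (t-1) t) :=
          hFint.mono_set hsub
        have hconst : ‖Φ t t₀ x v‖ * Real.exp (d * (t - 1 - s)) =
            ∫ _ in Set.Ioc (t-1) t, ‖Φ t t₀ x v‖ * Real.exp (d * (t - 1 - s)) := by
          rw [MeasureTheory.setIntegral_const, MeasureTheory.measureReal_def, hvol]
          simp
        have hFnn : 0 ≤ᵐ[MeasureTheory.volume.restrict (Set.Ioi s)] F := by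
          filter_upwards with τ
          simp only [hFdef]
          positivity
        have step1 : ‖Φ t t₀ x v‖ * Real.exp (d * (t-1-s)) ≤
            (K * Real.exp (ω 1)) * ∫ τ in Set.Ioc (t-1) t, F τ := by
          rw [hconst, ← MeasureTheory.integral_const_mul]
          refine MeasureTheory.setIntegral_mono_on ?_ (hFintIoc.const_mul _)
            measurableSet_Ioc hptw
          exact MeasureTheory.integrableOn_const (by rw [hvol]; exact ENNReal.one_ne_top)
        have step2 : (∫ τ in Set.Ioc (t-1) t, F τ) ≤ ∫ τ in Set.Ioi s, F τ :=
          MeasureTheory.setIntegral_mono_set hFint hFnn (HasSubset.Subset.eventuallyLE hsub)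
        have step3 : ‖Φ t t₀ x v‖ * Real.exp (d * (t-1-s)) ≤
            (K * Real.exp (ω 1)) * (D s * ‖w‖) := by
          refine step1.trans ?_
          exact mul_le_mul_of_nonneg_left (step2.trans hFbound) (by positivity)
        have hEinv : Real.exp (d*(t-1-s)) * (Real.exp d * Real.exp (d*s) * Real.exp (-d*t)) = 1 := by
          have h4 : Real.exp (d*(t-1-s)) * (Real.exp d * Real.exp (d*s) * Real.exp (-d*t))
              = Real.exp (d*(t-1-s) + d + d*s + -d*t) := by
            rw [Real.exp_add, Real.exp_add, Real.exp_add]; ring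
          rw [h4, show d*(t-1-s) + d + d*s + -d*t = 0 from by ring, Real.exp_zero]
        have hre : (C * max 1 (D s) * Real.exp (d*s) * Real.exp (-d*t) * ‖w‖) *
            Real.exp (d*(t-1-s)) = (K * Real.exp (ω 1)) * (max 1 (D s) * ‖w‖) := by
          rw [hC]
          calc K * Real.exp (ω 1) * Real.exp d * max 1 (D s) * Real.exp (d*s) *
                Real.exp (-d*t) * ‖w‖ * Real.exp (d*(t-1-s))
              = (K * Real.exp (ω 1)) * (max 1 (D s) * ‖w‖) *
                (Real.exp (d*(t-1-s)) * (Real.exp d * Real.exp (d*s) * Real.exp (-d*t))) := by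
                ring
            _ = (K * Real.exp (ω 1)) * (max 1 (D s) * ‖w‖) := by rw [hEinv]; ring
        have target : ‖Φ t t₀ x v‖ * Real.exp (d*(t-1-s)) ≤
            (C * max 1 (D s) * Real.exp (d*s) * Real.exp (-d*t) * ‖w‖) *
              Real.exp (d*(t-1-s)) := by
          rw [hre]
          refine step3.trans ?_
          refine mul_le_mul_of_nonneg_left ?_ (by positivity)
          exact mul_le_mul_of_nonneg_right (le_max_right _ _) (norm_nonneg _)
        exact (mul_le_mul_iff_of_pos_right (Real.exp_pos _)).1 target
    refine key.trans ?_
    have hle : C * max 1 (D s) * Real.exp (d*s)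
        ≤ max 1 (C * max 1 (D s) * Real.exp (d * s)) := le_max_right _ _
    exact mul_le_mul_of_nonneg_right
      (mul_le_mul_of_nonneg_right hle (Real.exp_pos _).le) (norm_nonneg _)
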